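/- If a string x contains three occurrences of the same string b at positions j_1 < j_2 < j_3 with j_3 - j_1 < |b|, then b has exponent strictly greater than 2 (i.e., the smallest period p of b satisfies |b|/p > 2). -/
import Mathlib


open scoped BigOperators

/-- One duplication-with-transposition step: `x = a·b·c·d → y = a·b·c·b·d`, `b` non-empty. -/
def DupStep {q : ℕ} (x y : List (Fin q)) : Prop :=
  ∃ a b c d : List (Fin q), b ≠ [] ∧ x = a ++ b ++ c ++ d ∧ y = a ++ b ++ c ++ b ++ d

/-- `DupPath m x y` : `y` is obtained from `x` by exactly `m` duplication steps. -/
def DupPath {q : ℕ} : ℕ → List (Fin q) → List (Fin q) → Prop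
  | 0, x, y => x = y
  | n + 1, x, y => ∃ z, DupStep x z ∧ DupPath n z y

/-- Hamming distance between two lists (of equal length in intended use). -/
def listHammingDist {q : ℕ} (b b' : List (Fin q)) : ℕ :=
  ((b.zip b').filter fun p => decide (p.1 ≠ p.2)).length

/-- One β-approximate duplication-with-transposition step. -/
def ApproxStep {q : ℕ} (β : ℝ) (x y : List (Fin q)) : Prop :=
  ∃ a b c bh d : List (Fin q), b ≠ [] ∧ bh.length = b.length ∧
    (listHammingDist b bh : ℝ) ≤ β * b.length ∧
    x = a ++ b ++ c ++ d ∧ y = a ++ b ++ c ++ bh ++ d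

/-- `ApproxPath β m x y` : `y` obtained from `x` by exactly `m` β-approximate duplications. -/
def ApproxPath {q : ℕ} (β : ℝ) : ℕ → List (Fin q) → List (Fin q) → Prop
  | 0, x, y => x = y
  | n + 1, x, y => ∃ z, ApproxStep β x z ∧ ApproxPath β n z y

/-- The root of a string: the subsequence of first occurrences of symbols. -/
def firstOccs {q : ℕ} (l : List (Fin q)) : List (Fin q) :=
  l.foldl (fun acc a => if a ∈ acc then acc else acc ++ [a]) []


lemma period_of_occs {q : ℕ} (x b : List (Fin q)) (u v : ℕ) (huv : u < v)
    (hu : (x.drop u).take b.length = b) (hv : (x.drop v).take b.length = b) :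
    ∀ i, i + (v - u) < b.length → b[i]? = b[i + (v - u)]? := by
  intro i hi
  have h1 : b[i]? = x[v + i]? := by
    rw [← hv, List.getElem?_take_of_lt (by omega), List.getElem?_drop]
  have h2 : b[i + (v - u)]? = x[u + (i + (v - u))]? := by
    rw [← hu, List.getElem?_take_of_lt hi, List.getElem?_drop]
  rw [h1, h2]
  congr 1
  omega

/-- three mutually overlapping occurrences of `b` (positions
`j₁ < j₂ < j₃` with `j₃ - j₁ < |b|`) force the least period `p` of `b` to
satisfy `2p < |b|`, i.e. exponent strictly greater than 2. -/
theorem stmt2 (q : ℕ) (x b : List (Fin q)) (hb : b ≠ [])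
    (j1 j2 j3 : ℕ) (h12 : j1 < j2) (h23 : j2 < j3) (hspan : j3 - j1 < b.length)
    (hocc : ∀ j ∈ ({j1, j2, j3} : Set ℕ),
      j + b.length ≤ x.length ∧ (x.drop j).take b.length = b)
    (p : ℕ)
    (hp : IsLeast {p : ℕ | 0 < p ∧ ∀ i, i + p < b.length → b[i]? = b[i + p]?} p) :
    2 * p < b.length := by
  have hb1 := hocc j1 (by simp)
  have hb2 := hocc j2 (by simp)
  have hb3 := hocc j3 (by simp)
  have hp12 : p ≤ j2 - j1 :=
    hp.2 ⟨by omega, period_of_occs x b j1 j2 h12 hb1.2 hb2.2⟩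
  have hp23 : p ≤ j3 - j2 :=
    hp.2 ⟨by omega, period_of_occs x b j2 j3 h23 hb2.2 hb3.2⟩
  omega
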